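/- For all j ∈ ℕ₀ and s₀ ∈ [0,T) it holds that ∫_{s₀}^T ((s₁−s₀)·ϱ(s₀,s₁))^{−1} ∫_{s₁}^T ((s₂−s₁)·ϱ(s₁,s₂))^{−1} ⋯ ∫_{s_j}^T ((s_{j+1}−s_j)·ϱ(s_j,s_{j+1}))^{−1} ds_{j+1} ⋯ ds₂ ds₁ = (T−s₀)^{j+1} · ∏_{i=0}^{j} ∫₀¹ (1−s)^{i}/(s·ρ(s)) ds ≥ (π(T−s₀))^{j+1} / Γ((j+3)/2)², where Γ denotes the Gamma function. -/

import Mathlib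

open MeasureTheory
open scoped ENNReal Real

/-- The iterated integral
`∫_{s₀}^T ((s₁−s₀)ϱ(s₀,s₁))⁻¹ ⋯ ∫_{s_{j−1}}^T ((s_j−s_{j−1})ϱ(s_{j−1},s_j))⁻¹ ds_j ⋯ ds₁`,
interpreted as an iterated lower Lebesgue integral with values in `[0,∞]`. -/
noncomputable def iterInt (T : ℝ) (ϱ : ℝ → ℝ → ℝ) : ℕ → ℝ → ℝ≥0∞
  | 0, _ => 1
  | j + 1, s₀ =>
      ∫⁻ s in Set.Ioo s₀ T,
        ENNReal.ofReal (((s - s₀) * ϱ s₀ s)⁻¹) * iterInt T ϱ j s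

/-- Change of variables for an affine map in a lower Lebesgue integral over `Ioo`. -/
lemma lint_affine {a b : ℝ} (hab : a < b) {g : ℝ → ℝ≥0∞} (hg : Measurable g) :
    ∫⁻ s in Set.Ioo a b, g s
      = ENNReal.ofReal (b - a) * ∫⁻ u in Set.Ioo (0:ℝ) 1, g ((b - a) * u + a) := by
  set c := b - a with hc
  have hcpos : 0 < c := sub_pos.mpr hab
  have hmul : Measurable fun u : ℝ => c * u := by fun_prop
  have hφ : Measurable fun u : ℝ => c * u + a := by fun_prop
  have hmap : Measure.map (fun u : ℝ => c * u + a) volume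
      = ENNReal.ofReal c⁻¹ • volume := by
    have h1 : (fun u : ℝ => c * u + a) = (fun x : ℝ => x + a) ∘ (fun u => c * u) := rfl
    rw [h1, ← Measure.map_map (measurable_add_const a) hmul,
      Real.map_volume_mul_left hcpos.ne', Measure.map_smul,
      map_add_right_eq_self volume a, abs_of_pos (inv_pos.mpr hcpos)]
  have hpre : (fun u : ℝ => c * u + a) ⁻¹' Set.Ioo a b = Set.Ioo 0 1 := by
    ext u
    simp only [Set.mem_preimage, Set.mem_Ioo]
    constructor
    · rintro ⟨h1, h2⟩
      constructor
      · nlinarith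
      · nlinarith
    · rintro ⟨h1, h2⟩
      constructor
      · nlinarith
      · nlinarith
  have key : ENNReal.ofReal c * ENNReal.ofReal c⁻¹ = 1 := by
    rw [← ENNReal.ofReal_mul hcpos.le, mul_inv_cancel₀ hcpos.ne', ENNReal.ofReal_one]
  calc ∫⁻ s in Set.Ioo a b, g s
      = ∫⁻ s, g s ∂(ENNReal.ofReal c
          • (Measure.map (fun u : ℝ => c * u + a) volume).restrict (Set.Ioo a b)) := by
        rw [hmap, Measure.restrict_smul, smul_smul, key, one_smul]
    _ = ENNReal.ofReal c * ∫⁻ s, g s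
          ∂((Measure.map (fun u : ℝ => c * u + a) volume).restrict (Set.Ioo a b)) :=
        lintegral_smul_measure _ _
    _ = ENNReal.ofReal c * ∫⁻ u in Set.Ioo (0:ℝ) 1, g (c * u + a) := by
        rw [Measure.restrict_map hφ measurableSet_Ioo, hpre, lintegral_map hg hφ]

/-- The real Beta integral `B(1/2, i/2 + 1)`. -/
lemma betaReal (i : ℕ) :
    ∫ x in (0:ℝ)..1, x ^ (-(1/2) : ℝ) * (1 - x) ^ ((i : ℝ)/2)
      = Real.Gamma (1/2) * Real.Gamma (((i:ℝ) + 2)/2) / Real.Gamma (((i:ℝ) + 3)/2) := by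
  have hv : (0:ℝ) < ((i:ℝ) + 2)/2 := by positivity
  have hC := Complex.Gamma_mul_Gamma_eq_betaIntegral
    (s := (1/2 : ℂ)) (t := ((((i:ℝ) + 2)/2 : ℝ) : ℂ)) (by norm_num) (by simpa using hv)
  have hbeta : Complex.betaIntegral (1/2) ((((i:ℝ) + 2)/2 : ℝ) : ℂ)
      = ((∫ x in (0:ℝ)..1, x ^ (-(1/2):ℝ) * (1 - x) ^ ((i:ℝ)/2) : ℝ) : ℂ) := by
    rw [Complex.betaIntegral, ← intervalIntegral.integral_ofReal]
    refine intervalIntegral.integral_congr fun x hx => ?_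
    rw [Set.uIcc_of_le (zero_le_one' ℝ), Set.mem_Icc] at hx
    rw [Complex.ofReal_mul, Complex.ofReal_cpow hx.1,
      Complex.ofReal_cpow (by linarith [hx.2] : (0:ℝ) ≤ 1 - x)]
    push_cast
    ring_nf
  have h2 : Real.Gamma (1/2) * Real.Gamma (((i:ℝ) + 2)/2)
      = Real.Gamma (((i:ℝ) + 3)/2)
        * ∫ x in (0:ℝ)..1, x ^ (-(1/2):ℝ) * (1 - x) ^ ((i:ℝ)/2) := by
    rw [hbeta, show (1/2 : ℂ) = ((1/2 : ℝ) : ℂ) by norm_num, ← Complex.ofReal_add,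
      Complex.Gamma_ofReal, Complex.Gamma_ofReal, Complex.Gamma_ofReal,
      ← Complex.ofReal_mul, ← Complex.ofReal_mul, Complex.ofReal_inj] at hC
    rw [show (1/2 + ((i:ℝ) + 2)/2 : ℝ) = ((i:ℝ) + 3)/2 by ring] at hC
    exact hC
  have h3 : 0 < Real.Gamma (((i:ℝ) + 3)/2) := Real.Gamma_pos_of_pos (by positivity)
  rw [eq_div_iff h3.ne']
  linear_combination -h2

lemma betaIntegrand_integrable (i : ℕ) :
    IntegrableOn (fun x : ℝ => x ^ (-(1/2):ℝ) * (1 - x) ^ ((i:ℝ)/2)) (Set.Ioo 0 1) := by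
  have hg : IntegrableOn (fun x : ℝ => x ^ (-(1/2):ℝ)) (Set.Ioo 0 1) :=
    ((intervalIntegral.intervalIntegrable_rpow' (by norm_num : (-1:ℝ) < -(1/2))).1).mono_set
      Set.Ioo_subset_Ioc_self
  refine MeasureTheory.Integrable.mono hg ?_ ?_
  · exact ((Measurable.aestronglyMeasurable (by fun_prop))).restrict
  · refine (ae_restrict_iff' measurableSet_Ioo).mpr (Filter.Eventually.of_forall ?_)
    intro x hx
    obtain ⟨h0, h1⟩ := hx
    have hx1 : (1 - x) ^ ((i:ℝ)/2) ≤ 1 :=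
      Real.rpow_le_one (by linarith) (by linarith) (by positivity)
    have hnn : (0:ℝ) ≤ x ^ (-(1/2):ℝ) := Real.rpow_nonneg h0.le _
    have hnn2 : (0:ℝ) ≤ (1 - x) ^ ((i:ℝ)/2) := Real.rpow_nonneg (by linarith) _
    rw [Real.norm_eq_abs, Real.norm_eq_abs, abs_of_nonneg (by positivity),
      abs_of_nonneg hnn]
    nlinarith

lemma betaLint (i : ℕ) :
    ∫⁻ s in Set.Ioo (0:ℝ) 1, ENNReal.ofReal (s ^ (-(1/2):ℝ) * (1 - s) ^ ((i:ℝ)/2))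
      = ENNReal.ofReal
          (Real.Gamma (1/2) * Real.Gamma (((i:ℝ) + 2)/2) / Real.Gamma (((i:ℝ) + 3)/2)) := by
  rw [← betaReal i, intervalIntegral.integral_of_le (zero_le_one' ℝ),
    integral_Ioc_eq_integral_Ioo]
  refine (ofReal_integral_eq_lintegral_ofReal (betaIntegrand_integrable i) ?_).symm
  refine (ae_restrict_iff' measurableSet_Ioo).mpr (Filter.Eventually.of_forall ?_)
  intro x hx
  obtain ⟨h0, h1⟩ := hx
  have := Real.rpow_nonneg h0.le (-(1/2):ℝ)
  have := Real.rpow_nonneg (by linarith : (0:ℝ) ≤ 1 - x) ((i:ℝ)/2)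
  positivity

/-- Cauchy–Schwarz step: each factor is at least `π (Γ((i+2)/2)/Γ((i+3)/2))²`. -/
lemma lemmaB (ρ : ℝ → ℝ) (hρmeas : Measurable ρ)
    (hρpos : ∀ r ∈ Set.Ioo (0 : ℝ) 1, 0 < ρ r)
    (hρint : ∫⁻ s in Set.Ioo (0 : ℝ) 1, ENNReal.ofReal (ρ s) = 1) (i : ℕ) :
    ENNReal.ofReal (π * (Real.Gamma (((i:ℝ)+2)/2) / Real.Gamma (((i:ℝ)+3)/2))^2)
      ≤ ∫⁻ s in Set.Ioo (0:ℝ) 1, ENNReal.ofReal ((1-s)^i / (s * ρ s)) := by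
  set μ := volume.restrict (Set.Ioo (0:ℝ) 1) with hμ
  set f : ℝ → ℝ≥0∞ := fun s => ENNReal.ofReal (((1-s)^i / (s * ρ s)) ^ ((1:ℝ)/2)) with hf
  set g : ℝ → ℝ≥0∞ := fun s => ENNReal.ofReal ((ρ s) ^ ((1:ℝ)/2)) with hg
  have hfm : Measurable f := by
    apply Measurable.ennreal_ofReal; fun_prop
  have hgm : Measurable g := by
    apply Measurable.ennreal_ofReal; fun_prop
  have hconj : Real.HolderConjugate 2 2 := Real.HolderConjugate.two_two
  have hold := ENNReal.lintegral_mul_le_Lp_mul_Lq μ hconj hfm.aemeasurable hgm.aemeasurable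
  have hfg : ∫⁻ a, (f * g) a ∂μ
      = ∫⁻ s in Set.Ioo (0:ℝ) 1, ENNReal.ofReal (s ^ (-(1/2):ℝ) * (1-s) ^ ((i:ℝ)/2)) := by
    refine setLIntegral_congr_fun measurableSet_Ioo ?_
    intro s hs
    obtain ⟨h0, h1⟩ := hs
    have hρ := hρpos s ⟨h0, h1⟩
    have hb1 : (0:ℝ) ≤ (1-s)^i / (s * ρ s) :=
      div_nonneg (pow_nonneg (by linarith) i) (mul_nonneg h0.le hρ.le)
    simp only [Pi.mul_apply, hf, hg]
    rw [← ENNReal.ofReal_mul (Real.rpow_nonneg hb1 _), ← Real.mul_rpow hb1 hρ.le]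
    congr 1
    have hxy : (1-s)^i / (s * ρ s) * ρ s = (1-s)^i / s := by
      field_simp
    have key : ((1-s)^i / s : ℝ) ^ ((1:ℝ)/2) = s ^ (-(1/2):ℝ) * (1-s) ^ ((i:ℝ)/2) := by
      rw [Real.div_rpow (pow_nonneg (by linarith) i) h0.le, ← Real.rpow_natCast (1-s) i,
        ← Real.rpow_mul (by linarith), show ((i:ℝ) * ((1:ℝ)/2)) = (i:ℝ)/2 by ring,
        Real.rpow_neg h0.le, div_eq_mul_inv, mul_comm]
    rw [hxy, key]
  have hf2 : ∫⁻ a, f a ^ (2:ℝ) ∂μ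
      = ∫⁻ s in Set.Ioo (0:ℝ) 1, ENNReal.ofReal ((1-s)^i / (s * ρ s)) := by
    refine setLIntegral_congr_fun measurableSet_Ioo ?_
    intro s hs
    obtain ⟨h0, h1⟩ := hs
    have hρ := hρpos s ⟨h0, h1⟩
    have hb1 : (0:ℝ) ≤ (1-s)^i / (s * ρ s) :=
      div_nonneg (pow_nonneg (by linarith) i) (mul_nonneg h0.le hρ.le)
    simp only [hf]
    rw [ENNReal.ofReal_rpow_of_nonneg (Real.rpow_nonneg hb1 _) (by norm_num : (0:ℝ) ≤ 2),
      ← Real.rpow_mul hb1, show ((1:ℝ)/2 * 2) = 1 by norm_num, Real.rpow_one]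
  have hg2 : ∫⁻ a, g a ^ (2:ℝ) ∂μ = 1 := by
    rw [← hρint]
    refine setLIntegral_congr_fun measurableSet_Ioo ?_
    intro s hs
    have hρ := hρpos s hs
    simp only [hg]
    rw [ENNReal.ofReal_rpow_of_nonneg (Real.rpow_nonneg hρ.le _) (by norm_num : (0:ℝ) ≤ 2),
      ← Real.rpow_mul hρ.le, show ((1:ℝ)/2 * 2) = 1 by norm_num, Real.rpow_one]
  rw [hfg, hf2, hg2, betaLint i, ENNReal.one_rpow, mul_one] at hold
  have hΓa : 0 < Real.Gamma (((i:ℝ)+2)/2) := Real.Gamma_pos_of_pos (by positivity)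
  have hΓb : 0 < Real.Gamma (((i:ℝ)+3)/2) := Real.Gamma_pos_of_pos (by positivity)
  have hB : (0:ℝ) ≤ Real.Gamma (1/2) * Real.Gamma (((i:ℝ)+2)/2) / Real.Gamma (((i:ℝ)+3)/2) := by
    have := Real.Gamma_pos_of_pos (by norm_num : (0:ℝ) < 1/2)
    positivity
  have hsq := ENNReal.rpow_le_rpow hold (by norm_num : (0:ℝ) ≤ 2)
  rw [← ENNReal.rpow_mul, show ((1:ℝ)/2 * 2) = 1 by norm_num, ENNReal.rpow_one,
    ENNReal.ofReal_rpow_of_nonneg hB (by norm_num : (0:ℝ) ≤ 2)] at hsq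
  refine le_trans (le_of_eq ?_) hsq
  congr 1
  rw [Real.rpow_two, Real.Gamma_one_half_eq, mul_div_assoc, mul_pow,
    Real.sq_sqrt Real.pi_pos.le]

/-- Product lower bound via telescoping. -/
lemma prodBound (ρ : ℝ → ℝ) (hρmeas : Measurable ρ)
    (hρpos : ∀ r ∈ Set.Ioo (0 : ℝ) 1, 0 < ρ r)
    (hρint : ∫⁻ s in Set.Ioo (0 : ℝ) 1, ENNReal.ofReal (ρ s) = 1) :
    ∀ j : ℕ,
      ENNReal.ofReal (π^(j+1) / Real.Gamma (((j:ℝ)+3)/2)^2)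
        ≤ ∏ i ∈ Finset.range (j+1),
            ∫⁻ s in Set.Ioo (0:ℝ) 1, ENNReal.ofReal ((1-s)^i / (s * ρ s)) := by
  intro j
  induction j with
  | zero =>
    rw [Finset.prod_range_one]
    refine le_trans (le_of_eq ?_) (lemmaB ρ hρmeas hρpos hρint 0)
    norm_num [Real.Gamma_one, div_eq_mul_inv]
  | succ j ih =>
    rw [Finset.prod_range_succ]
    have hB := lemmaB ρ hρmeas hρpos hρint (j+1)
    have hΓ1 : 0 < Real.Gamma (((j:ℝ)+3)/2) := Real.Gamma_pos_of_pos (by positivity)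
    have hΓ2 : 0 < Real.Gamma (((j:ℝ)+4)/2) := Real.Gamma_pos_of_pos (by positivity)
    have hcast1 : (((j+1:ℕ):ℝ)+3)/2 = ((j:ℝ)+4)/2 := by push_cast; ring
    have hcast2 : (((j+1:ℕ):ℝ)+2)/2 = ((j:ℝ)+3)/2 := by push_cast; ring
    rw [hcast1, hcast2] at hB
    rw [show ((((j:ℕ)+1:ℕ):ℝ)+3)/2 = ((j:ℝ)+4)/2 by push_cast; ring]
    have hid : π^(j+1+1) / Real.Gamma (((j:ℝ)+4)/2)^2
        = (π^(j+1) / Real.Gamma (((j:ℝ)+3)/2)^2)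
          * (π * (Real.Gamma (((j:ℝ)+3)/2) / Real.Gamma (((j:ℝ)+4)/2))^2) := by
      field_simp
      ring
    rw [hid, ENNReal.ofReal_mul (by positivity)]
    exact mul_le_mul' ih hB

lemma iterInt_eq (T : ℝ) (hT : 0 < T) (ρ : ℝ → ℝ) (hρmeas : Measurable ρ)
    (ϱ : ℝ → ℝ → ℝ)
    (hϱ : ∀ t ∈ Set.Ico (0:ℝ) T, ∀ s ∈ Set.Ioc t T,
      ϱ t s = (T - t)⁻¹ * ρ ((s - t)/(T - t))) :
    ∀ j : ℕ, ∀ s₀ ∈ Set.Ico (0:ℝ) T,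
      iterInt T ϱ j s₀ = ENNReal.ofReal ((T - s₀)^j)
        * ∏ i ∈ Finset.range j,
            ∫⁻ s in Set.Ioo (0:ℝ) 1, ENNReal.ofReal ((1-s)^i / (s * ρ s)) := by
  intro j
  induction j with
  | zero => intro s₀ _; simp [iterInt]
  | succ j ih =>
    intro s₀ hs₀
    obtain ⟨hs₀0, hs₀T⟩ := hs₀
    have hcpos : (0:ℝ) < T - s₀ := by linarith
    have hGmeas : Measurable fun s : ℝ =>
        ENNReal.ofReal (((s - s₀) * ((T - s₀)⁻¹ * ρ ((s - s₀)/(T - s₀))))⁻¹ * (T - s)^j) := by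
      apply Measurable.ennreal_ofReal; fun_prop
    have step1 : iterInt T ϱ (j+1) s₀
        = (∫⁻ s in Set.Ioo s₀ T,
            ENNReal.ofReal (((s - s₀) * ((T - s₀)⁻¹ * ρ ((s - s₀)/(T - s₀))))⁻¹ * (T - s)^j))
          * ∏ i ∈ Finset.range j,
              ∫⁻ s in Set.Ioo (0:ℝ) 1, ENNReal.ofReal ((1-s)^i / (s * ρ s)) := by
      show (∫⁻ s in Set.Ioo s₀ T,
          ENNReal.ofReal (((s - s₀) * ϱ s₀ s)⁻¹) * iterInt T ϱ j s) = _
      rw [← lintegral_mul_const _ hGmeas]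
      refine setLIntegral_congr_fun measurableSet_Ioo ?_
      intro s hs
      obtain ⟨h1, h2⟩ := hs
      beta_reduce
      rw [ih s ⟨by linarith, h2⟩, hϱ s₀ ⟨hs₀0, hs₀T⟩ s ⟨h1, h2.le⟩, ← mul_assoc,
        ← ENNReal.ofReal_mul' (pow_nonneg (by linarith : (0:ℝ) ≤ T - s) j)]
    have step2 : (∫⁻ s in Set.Ioo s₀ T,
            ENNReal.ofReal (((s - s₀) * ((T - s₀)⁻¹ * ρ ((s - s₀)/(T - s₀))))⁻¹ * (T - s)^j))
        = ENNReal.ofReal ((T - s₀)^(j+1))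
          * ∫⁻ u in Set.Ioo (0:ℝ) 1, ENNReal.ofReal ((1-u)^j / (u * ρ u)) := by
      rw [lint_affine hs₀T hGmeas]
      have hptw : ∀ u ∈ Set.Ioo (0:ℝ) 1,
          ENNReal.ofReal ((((T - s₀) * u + s₀ - s₀)
              * ((T - s₀)⁻¹ * ρ (((T - s₀) * u + s₀ - s₀)/(T - s₀))))⁻¹
              * (T - ((T - s₀) * u + s₀))^j)
            = ENNReal.ofReal ((T - s₀)^j) * ENNReal.ofReal ((1-u)^j / (u * ρ u)) := by
        intro u hu
        have e1 : (T - s₀) * u + s₀ - s₀ = (T - s₀) * u := by ring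
        have e2 : ((T - s₀) * u)/(T - s₀) = u := by field_simp
        have e3 : T - ((T - s₀) * u + s₀) = (T - s₀) * (1 - u) := by ring
        rw [e1, e2, e3,
          ← ENNReal.ofReal_mul (pow_nonneg hcpos.le j)]
        congr 1
        have e4 : (T - s₀) * u * ((T - s₀)⁻¹ * ρ u) = u * ρ u := by
          field_simp
        rw [e4, mul_pow, div_eq_mul_inv]
        ring
      rw [setLIntegral_congr_fun measurableSet_Ioo hptw,
        lintegral_const_mul _ (by apply Measurable.ennreal_ofReal; fun_prop : Measurable fun u : ℝ => ENNReal.ofReal ((1-u)^j / (u * ρ u))),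
        ← mul_assoc, ← ENNReal.ofReal_mul hcpos.le, ← pow_succ']
    rw [step1, step2, Finset.prod_range_succ]
    ring

/-- Remark 2.6: let `T ∈ (0,∞)`, let `ρ : (0,1) → (0,∞)` be measurable with `∫₀¹ ρ(s) ds = 1`,
and let `ϱ(t,s) = (T−t)⁻¹ ρ((s−t)/(T−t))`.  Then for all `j ∈ ℕ₀` and `s₀ ∈ [0,T)` the iterated
integral (with `j+1` integrations) equals
`(T−s₀)^{j+1} ∏_{i=0}^{j} ∫₀¹ (1−s)^i/(s ρ(s)) ds` and is at least
`(π(T−s₀))^{j+1}/Γ((j+3)/2)²`. -/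
theorem stmt11 (T : ℝ) (hT : 0 < T)
    (ρ : ℝ → ℝ) (hρmeas : Measurable ρ) (hρpos : ∀ r ∈ Set.Ioo (0 : ℝ) 1, 0 < ρ r)
    (hρint : ∫⁻ s in Set.Ioo (0 : ℝ) 1, ENNReal.ofReal (ρ s) = 1)
    (ϱ : ℝ → ℝ → ℝ)
    (hϱpos : ∀ t ∈ Set.Icc (0 : ℝ) T, ∀ s ∈ Set.Icc (0 : ℝ) T, 0 < ϱ t s)
    (hϱ : ∀ t ∈ Set.Ico (0 : ℝ) T, ∀ s ∈ Set.Ioc t T,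
      ϱ t s = (T - t)⁻¹ * ρ ((s - t) / (T - t)))
    (j : ℕ) (s₀ : ℝ) (hs₀ : s₀ ∈ Set.Ico (0 : ℝ) T) :
    iterInt T ϱ (j + 1) s₀
        = ENNReal.ofReal ((T - s₀) ^ (j + 1))
          * ∏ i ∈ Finset.range (j + 1),
              ∫⁻ s in Set.Ioo (0 : ℝ) 1, ENNReal.ofReal ((1 - s) ^ i / (s * ρ s))
      ∧ ENNReal.ofReal ((π * (T - s₀)) ^ (j + 1) / Real.Gamma (((j : ℝ) + 3) / 2) ^ 2)
          ≤ iterInt T ϱ (j + 1) s₀ := by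
  have hI := iterInt_eq T hT ρ hρmeas ϱ hϱ (j+1) s₀ hs₀
  refine ⟨hI, ?_⟩
  rw [hI]
  have hTs : (0:ℝ) ≤ T - s₀ := by linarith [hs₀.2]
  rw [show (π * (T - s₀))^(j+1) / Real.Gamma (((j:ℝ)+3)/2)^2
      = (T - s₀)^(j+1) * (π^(j+1) / Real.Gamma (((j:ℝ)+3)/2)^2) by rw [mul_pow]; ring,
    ENNReal.ofReal_mul (pow_nonneg hTs _)]
  exact mul_le_mul_right (prodBound ρ hρmeas hρpos hρint j) _
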